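/- Let f₁, …, f_m : [0,1] → ℝ be continuous functions. Then for every element r of the ℝ-subalgebra of C[0,1] generated by f₁, …, f_m, the upper box dimension of the graph of r satisfies dim_B̄ G(r) ≤ max{dim_B̄ G(f₁), …, dim_B̄ G(f_m)}. -/

import Mathlib

open Set Filter Metric

noncomputable def coverNum {α : Type*} [PseudoMetricSpace α] (F : Set α) (δ : ℝ) : ℕ :=
  sInf {n : ℕ | ∃ t : Finset α, t.card = n ∧ F ⊆ ⋃ p ∈ t, Metric.closedBall p δ}

noncomputable def upperBoxDim {α : Type*} [PseudoMetricSpace α] (F : Set α) : ℝ :=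
  Filter.limsup (fun δ : ℝ => Real.log (coverNum F δ) / -Real.log δ)
    (nhdsWithin (0 : ℝ) (Set.Ioi 0))

noncomputable def lowerBoxDim {α : Type*} [PseudoMetricSpace α] (F : Set α) : ℝ :=
  Filter.liminf (fun δ : ℝ => Real.log (coverNum F δ) / -Real.log δ)
    (nhdsWithin (0 : ℝ) (Set.Ioi 0))

/-- Graph of `f` over the set `X`. -/
def fnGraphOn (f : ℝ → ℝ) (X : Set ℝ) : Set (ℝ × ℝ) := (fun x => (x, f x)) '' X

/-- Graph of `f` over `[0,1]`. -/
def G (f : ℝ → ℝ) : Set (ℝ × ℝ) := fnGraphOn f (Set.Icc 0 1)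

def graphC (f : C(↥(Set.Icc (0:ℝ) 1), ℝ)) : Set (ℝ × ℝ) :=
  Set.range fun x : ↥(Set.Icc (0:ℝ) 1) => ((x : ℝ), f x)



section osc
variable {g g1 g2 : ℝ → ℝ} {a b : ℝ}

/-- oscillation of `g` on `[a,b]`. -/
noncomputable def osc (g : ℝ → ℝ) (a b : ℝ) : ℝ :=
  sSup (g '' Icc a b) - sInf (g '' Icc a b)

lemma bddAbove_img (hg : Continuous g) : BddAbove (g '' Icc a b) :=
  (isCompact_Icc.image hg).bddAbove

lemma bddBelow_img (hg : Continuous g) : BddBelow (g '' Icc a b) :=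
  (isCompact_Icc.image hg).bddBelow

lemma le_sSup_img (hg : Continuous g) {x : ℝ} (hx : x ∈ Icc a b) :
    g x ≤ sSup (g '' Icc a b) :=
  le_csSup (bddAbove_img hg) ⟨x, hx, rfl⟩

lemma sInf_img_le (hg : Continuous g) {x : ℝ} (hx : x ∈ Icc a b) :
    sInf (g '' Icc a b) ≤ g x :=
  csInf_le (bddBelow_img hg) ⟨x, hx, rfl⟩

lemma sub_le_osc (hg : Continuous g) {x y : ℝ} (hx : x ∈ Icc a b) (hy : y ∈ Icc a b) :
    g x - g y ≤ osc g a b :=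
  sub_le_sub (le_sSup_img hg hx) (sInf_img_le hg hy)

lemma abs_sub_le_osc (hg : Continuous g) {x y : ℝ} (hx : x ∈ Icc a b) (hy : y ∈ Icc a b) :
    |g x - g y| ≤ osc g a b := by
  rcases abs_sub_le_iff.mpr ⟨sub_le_osc hg hx hy, sub_le_osc hg hy hx⟩ with h
  exact h

lemma osc_nonneg (hg : Continuous g) (hab : a ≤ b) : 0 ≤ osc g a b := by
  have := sub_le_osc hg (show a ∈ Icc a b from ⟨le_refl _, hab⟩) ⟨le_refl _, hab⟩
  simpa using this

lemma osc_le (hab : a ≤ b) {K : ℝ}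
    (h : ∀ x ∈ Icc a b, ∀ y ∈ Icc a b, g x - g y ≤ K) : osc g a b ≤ K := by
  have hne : (g '' Icc a b).Nonempty := (nonempty_Icc.mpr hab).image g
  rw [osc, sub_le_iff_le_add]
  apply csSup_le hne
  rintro z ⟨x, hx, rfl⟩
  rw [← sub_le_iff_le_add']
  apply le_csInf hne
  rintro w ⟨y, hy, rfl⟩
  linarith [h x hx y hy]

lemma osc_add_le (hg1 : Continuous g1) (hg2 : Continuous g2) (hab : a ≤ b) :
    osc (fun x => g1 x + g2 x) a b ≤ osc g1 a b + osc g2 a b := by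
  apply osc_le hab
  intro x hx y hy
  have := sub_le_osc hg1 hx hy
  have := sub_le_osc hg2 hx hy
  linarith

lemma osc_mul_le (hg1 : Continuous g1) (hg2 : Continuous g2) (hab : a ≤ b)
    {M1 M2 : ℝ} (h1 : ∀ x, |g1 x| ≤ M1) (h2 : ∀ x, |g2 x| ≤ M2) :
    osc (fun x => g1 x * g2 x) a b ≤ M1 * osc g2 a b + M2 * osc g1 a b := by
  apply osc_le hab
  intro x hx y hy
  have key : g1 x * g2 x - g1 y * g2 y = g1 x * (g2 x - g2 y) + g2 y * (g1 x - g1 y) := by ring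
  rw [show (fun x => g1 x * g2 x) x - (fun x => g1 x * g2 x) y = g1 x * (g2 x - g2 y) + g2 y * (g1 x - g1 y) from by simp only []; ring]
  have e1 : g1 x * (g2 x - g2 y) ≤ M1 * osc g2 a b := by
    calc g1 x * (g2 x - g2 y) ≤ |g1 x * (g2 x - g2 y)| := le_abs_self _
    _ = |g1 x| * |g2 x - g2 y| := abs_mul _ _
    _ ≤ M1 * osc g2 a b := by
        apply mul_le_mul (h1 x) (abs_sub_le_osc hg2 hx hy) (abs_nonneg _)
        exact le_trans (abs_nonneg _) (h1 x)
  have e2 : g2 y * (g1 x - g1 y) ≤ M2 * osc g1 a b := by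
    calc g2 y * (g1 x - g1 y) ≤ |g2 y * (g1 x - g1 y)| := le_abs_self _
    _ = |g2 y| * |g1 x - g1 y| := abs_mul _ _
    _ ≤ M2 * osc g1 a b := by
        apply mul_le_mul (h2 y) (abs_sub_le_osc hg1 hx hy) (abs_nonneg _)
        exact le_trans (abs_nonneg _) (h2 y)
  linarith

lemma osc_const (c : ℝ) (hab : a ≤ b) : osc (fun _ => c) a b ≤ 0 := by
  apply osc_le hab; intro x hx y hy; simp

lemma osc_le_two_mul (hg : Continuous g) (hab : a ≤ b) {M : ℝ} (h : ∀ x, |g x| ≤ M) :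
    osc g a b ≤ 2 * M := by
  apply osc_le hab
  intro x hx y hy
  have := abs_le.mp (h x); have := abs_le.mp (h y); linarith

end osc




/-- number of columns -/
noncomputable def ncol (δ : ℝ) : ℕ := ⌈1/δ⌉₊

/-- total oscillation -/
noncomputable def Tosc (g : ℝ → ℝ) (δ : ℝ) : ℝ :=
  ∑ i ∈ Finset.range (ncol δ), osc g (i * δ) (i * δ + δ)

noncomputable def Psi (g : ℝ → ℝ) (δ : ℝ) : ℝ := (ncol δ) * δ + Tosc g δ

def graphOf (g : ℝ → ℝ) : Set (ℝ × ℝ) := (fun x => (x, g x)) '' Icc 0 1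

variable {g : ℝ → ℝ} {δ : ℝ}

lemma ncol_pos (hδ : 0 < δ) : 0 < ncol δ := by
  rw [ncol, Nat.ceil_pos]; positivity

lemma one_le_ncol_mul (hδ : 0 < δ) : 1 ≤ (ncol δ : ℝ) * δ := by
  have h := Nat.le_ceil (1/δ)
  rw [ncol]
  calc (1:ℝ) = (1/δ) * δ := by field_simp
  _ ≤ _ := by apply mul_le_mul_of_nonneg_right h hδ.le

lemma ncol_mul_le (hδ : 0 < δ) (hδ1 : δ ≤ 1) : (ncol δ : ℝ) * δ ≤ 2 := by
  have h : (ncol δ : ℝ) < 1/δ + 1 := Nat.ceil_lt_add_one (by positivity)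
  have := mul_le_mul_of_nonneg_right h.le hδ.le
  calc (ncol δ : ℝ) * δ ≤ (1/δ + 1) * δ := this
  _ = 1 + δ := by field_simp
  _ ≤ 2 := by linarith

lemma ncol_le (hδ : 0 < δ) (hδ1 : δ ≤ 1) : (ncol δ : ℝ) ≤ 2 / δ := by
  rw [le_div_iff₀ hδ]; exact ncol_mul_le hδ hδ1

-- choosing the column of a point x ∈ [0,1]
lemma exists_col (hδ : 0 < δ) {x : ℝ} (hx : x ∈ Icc (0:ℝ) 1) :
    ∃ i ∈ Finset.range (ncol δ), x ∈ Icc ((i:ℝ) * δ) ((i:ℝ) * δ + δ) := by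
  obtain ⟨hx0, hx1⟩ := hx
  have hn := ncol_pos hδ
  refine ⟨min (⌊x/δ⌋₊) (ncol δ - 1), Finset.mem_range.mpr ?_, ?_, ?_⟩
  · exact lt_of_le_of_lt (min_le_right _ _) (Nat.sub_lt hn one_pos)
  · -- lower bound
    have h1 : ((min (⌊x/δ⌋₊) (ncol δ - 1) : ℕ) : ℝ) ≤ (⌊x/δ⌋₊ : ℝ) := by
      exact_mod_cast min_le_left _ _
    have h2 : (⌊x/δ⌋₊ : ℝ) ≤ x / δ := Nat.floor_le (by positivity)
    calc ((min (⌊x/δ⌋₊) (ncol δ - 1) : ℕ) : ℝ) * δ ≤ (x/δ) * δ := by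
          apply mul_le_mul_of_nonneg_right (le_trans h1 h2) hδ.le
    _ = x := by field_simp
  · -- upper bound
    rcases min_cases (⌊x/δ⌋₊) (ncol δ - 1) with ⟨heq, hle⟩ | ⟨heq, hlt⟩
    · rw [heq]
      have h2 : x / δ < ⌊x/δ⌋₊ + 1 := Nat.lt_floor_add_one _
      have := mul_lt_mul_of_pos_right h2 hδ
      rw [div_mul_cancel₀ _ hδ.ne'] at this
      nlinarith
    · rw [heq]
      have h1 : (1:ℝ) ≤ (ncol δ : ℝ) * δ := one_le_ncol_mul hδ
      have hcast : ((ncol δ - 1 : ℕ) : ℝ) = (ncol δ : ℝ) - 1 := by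
        have : (1:ℕ) ≤ ncol δ := hn
        push_cast [Nat.cast_sub this]; ring
      rw [hcast]
      nlinarith

lemma graphOf_nonempty : (graphOf g).Nonempty := ⟨(0, g 0), ⟨0, ⟨le_refl _, zero_le_one⟩, rfl⟩⟩

open Finset in
/-- Explicit cover of the graph: per column, a stack of balls. -/
lemma exists_cover (hg : Continuous g) (hδ : 0 < δ) :
    ∃ t : Finset (ℝ × ℝ), ((t.card : ℝ) ≤ Tosc g δ / (2*δ) + 2 * (ncol δ)) ∧
      graphOf g ⊆ ⋃ p ∈ t, Metric.closedBall p δ := by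
  classical
  set n := ncol δ with hn
  set K : ℕ → ℕ := fun i => ⌈osc g (i*δ) (i*δ+δ) / (2*δ)⌉₊ with hK
  set mlo : ℕ → ℝ := fun i => sInf (g '' Icc (i*δ) (i*δ+δ)) with hmlo
  set B : ℕ → Finset (ℝ × ℝ) := fun i =>
    (range (K i + 1)).image (fun k : ℕ => ((i:ℝ)*δ, mlo i + δ + 2*δ*(k:ℝ))) with hB
  refine ⟨(range n).biUnion B, ?_, ?_⟩
  · calc (((range n).biUnion B).card : ℝ) ≤ ((∑ i ∈ range n, (B i).card : ℕ) : ℝ) := by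
          exact_mod_cast Nat.cast_le.mpr (card_biUnion_le)
    _ ≤ ∑ i ∈ range n, ((K i : ℝ) + 1) := by
          push_cast
          apply Finset.sum_le_sum
          intro i _
          calc ((B i).card : ℝ) ≤ ((range (K i + 1)).card : ℝ) :=
                Nat.cast_le.mpr card_image_le
          _ = (K i : ℝ) + 1 := by simp
    _ ≤ ∑ i ∈ range n, (osc g (i*δ) (i*δ+δ) / (2*δ) + 2) := by
          apply Finset.sum_le_sum
          intro i hi
          have hab : (i:ℝ)*δ ≤ (i:ℝ)*δ + δ := by linarith
          have hosc : 0 ≤ osc g ((i:ℝ)*δ) ((i:ℝ)*δ+δ) := osc_nonneg hg hab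
          have := Nat.ceil_lt_add_one (R := ℝ) (a := osc g ((i:ℝ)*δ) ((i:ℝ)*δ+δ) / (2*δ))
            (by positivity)
          simp only [hK]
          push_cast
          linarith
    _ = Tosc g δ / (2*δ) + 2 * n := by
          rw [Finset.sum_add_distrib, Tosc, Finset.sum_div]
          simp [mul_comm]
          rfl
  · rintro _ ⟨x, hx', rfl⟩
    obtain ⟨i, hi, hcol⟩ := exists_col hδ hx'
    have hab : (i:ℝ)*δ ≤ (i:ℝ)*δ + δ := by linarith
    have hglo : mlo i ≤ g x := sInf_img_le hg hcol
    have hosc : g x - mlo i ≤ osc g ((i:ℝ)*δ) ((i:ℝ)*δ+δ) := by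
      rw [osc]; exact sub_le_sub (le_sSup_img hg hcol) (le_refl _)
    have hu0 : 0 ≤ g x - mlo i := by linarith [sInf_img_le hg hcol]
    set k := ⌊(g x - mlo i) / (2*δ)⌋₊ with hk
    have hkK : k ≤ K i := by
      apply le_trans (Nat.floor_mono (div_le_div_of_nonneg_right hosc (by positivity)))
      exact Nat.floor_le_ceil _
    refine mem_iUnion₂.mpr ⟨((i:ℝ)*δ, mlo i + δ + 2*δ*(k:ℝ)), ?_, ?_⟩
    · exact Finset.mem_biUnion.mpr ⟨i, hi, Finset.mem_image.mpr
        ⟨k, Finset.mem_range.mpr (Nat.lt_succ_of_le hkK), rfl⟩⟩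
    · rw [Metric.mem_closedBall, Prod.dist_eq]
      have h1 : 2*δ*(k:ℝ) ≤ g x - mlo i := by
        have h := Nat.floor_le (show 0 ≤ (g x - mlo i)/(2*δ) by positivity)
        rw [← hk] at h
        calc 2*δ*(k:ℝ) ≤ 2*δ*((g x - mlo i)/(2*δ)) :=
              mul_le_mul_of_nonneg_left h (by positivity)
        _ = g x - mlo i := by field_simp
      have h2 : g x - mlo i < 2*δ*((k:ℝ)+1) := by
        have h := Nat.lt_floor_add_one ((g x - mlo i)/(2*δ))
        rw [← hk] at h
        calc g x - mlo i = 2*δ*((g x - mlo i)/(2*δ)) := by field_simp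
        _ < 2*δ*((k:ℝ)+1) := mul_lt_mul_of_pos_left h (by positivity)
      apply max_le
      · rw [Real.dist_eq, abs_le]
        dsimp only
        constructor <;> linarith [hcol.1, hcol.2]
      · rw [Real.dist_eq, abs_le]
        dsimp only
        constructor <;> linarith

lemma coverNum_le_card {α : Type*} [PseudoMetricSpace α] {F : Set α} {δ : ℝ}
    (t : Finset α) (h : F ⊆ ⋃ p ∈ t, Metric.closedBall p δ) : coverNum F δ ≤ t.card :=
  Nat.sInf_le ⟨t, rfl, h⟩

lemma coverNum_spec {α : Type*} [PseudoMetricSpace α] {F : Set α} {δ : ℝ}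
    (hex : ∃ t : Finset α, F ⊆ ⋃ p ∈ t, Metric.closedBall p δ) :
    ∃ t : Finset α, t.card = coverNum F δ ∧ F ⊆ ⋃ p ∈ t, Metric.closedBall p δ := by
  obtain ⟨t, ht⟩ := hex
  have := Nat.sInf_mem (s := {n : ℕ | ∃ t : Finset α, t.card = n ∧ F ⊆ ⋃ p ∈ t, Metric.closedBall p δ})
    ⟨t.card, t, rfl, ht⟩
  obtain ⟨t0, h1, h2⟩ := this
  exact ⟨t0, h1, h2⟩

lemma coverNum_pos {α : Type*} [PseudoMetricSpace α] {F : Set α} {δ : ℝ}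
    (hne : F.Nonempty)
    (hex : ∃ t : Finset α, F ⊆ ⋃ p ∈ t, Metric.closedBall p δ) :
    0 < coverNum F δ := by
  obtain ⟨t0, h1, h2⟩ := coverNum_spec hex
  rcases Nat.eq_zero_or_pos (coverNum F δ) with h | h
  · exfalso
    rw [h, Finset.card_eq_zero] at h1
    subst h1
    obtain ⟨x, hx⟩ := hne
    simpa using h2 hx
  · exact h

open MeasureTheory in
lemma length_le_card {β : Type*} (u : Finset β) (c : β → ℝ) {δ a b : ℝ} (hδ : 0 ≤ δ)
    (h : Icc a b ⊆ ⋃ p ∈ u, Icc (c p - δ) (c p + δ)) : b - a ≤ 2 * δ * u.card := by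
  rcases le_or_gt b a with hba | hab
  · have : (0:ℝ) ≤ 2 * δ * u.card := by positivity
    linarith
  · have h1 : volume (Icc a b) ≤ ∑ p ∈ u, volume (Icc (c p - δ) (c p + δ)) :=
      le_trans (measure_mono h) (measure_biUnion_finset_le u _)
    rw [Real.volume_Icc] at h1
    have h2 : ∑ p ∈ u, volume (Icc (c p - δ) (c p + δ))
        = (u.card : ENNReal) * ENNReal.ofReal (2*δ) := by
      rw [Finset.sum_congr rfl (fun p _ => by rw [Real.volume_Icc])]
      rw [Finset.sum_congr rfl (fun p _ => by rw [show c p + δ - (c p - δ) = 2*δ by ring])]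
      rw [Finset.sum_const, nsmul_eq_mul]
    rw [h2] at h1
    have h3 : ENNReal.ofReal (b - a) ≤ ENNReal.ofReal ((u.card : ℝ) * (2*δ)) := by
      rw [ENNReal.ofReal_mul (by positivity)]
      simpa [ENNReal.ofReal_natCast] using h1
    have h4 := (ENNReal.ofReal_le_ofReal_iff (by positivity)).mp h3
    linarith

lemma card_le_of_close {s : Finset ℕ} {k : ℕ} (h : ∀ a ∈ s, ∀ b ∈ s, a ≤ b + k) :
    s.card ≤ k + 1 := by
  rcases s.eq_empty_or_nonempty with rfl | hne
  · simp
  · have hsub : s ⊆ Finset.Icc (s.min' hne) (s.min' hne + k) := by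
      intro b hb
      rw [Finset.mem_Icc]
      exact ⟨s.min'_le b hb, h b hb _ (s.min'_mem hne)⟩
    calc s.card ≤ (Finset.Icc (s.min' hne) (s.min' hne + k)).card := Finset.card_le_card hsub
    _ = k + 1 := by rw [Nat.card_Icc]; omega

open Finset in
lemma Psi_le_coverNum (hg : Continuous g) (hclamp : ∀ x : ℝ, 0 ≤ x → g x = g (min 1 x))
    (hδ : 0 < δ) (hδ1 : δ ≤ 1)
    {t : Finset (ℝ × ℝ)} (ht : graphOf g ⊆ ⋃ p ∈ t, Metric.closedBall p δ) :
    Psi g δ ≤ 14 * δ * t.card := by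
  classical
  -- part (a): 1 ≤ 2δ card, hence ncol * δ ≤ 2 ≤ 4 δ card
  have hxproj : Icc (0:ℝ) 1 ⊆ ⋃ p ∈ t, Icc (p.1 - δ) (p.1 + δ) := by
    intro x hx
    obtain ⟨p, hp, hd⟩ := mem_iUnion₂.mp (ht ⟨x, hx, rfl⟩)
    rw [Metric.mem_closedBall, Prod.dist_eq] at hd
    have := le_trans (le_max_left _ _) hd
    rw [Real.dist_eq, abs_le] at this
    exact mem_iUnion₂.mpr ⟨p, hp, by constructor <;> [linarith [this.1]; linarith [this.2]]⟩
  have hcard1 : (1:ℝ) ≤ 2 * δ * t.card := by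
    have := length_le_card t (fun p => p.1) hδ.le hxproj
    linarith
  have hpart_a : (ncol δ : ℝ) * δ ≤ 4 * δ * t.card := by
    have := ncol_mul_le hδ hδ1
    linarith
  -- part (b): T ≤ 10 δ card
  have hpart_b : Tosc g δ ≤ 10 * δ * t.card := by
    set P : ℕ → ℝ × ℝ → Prop := fun i p => |p.1 - (i:ℝ)*δ| ≤ 2*δ with hP
    -- per-column bound
    have hcol : ∀ i ∈ range (ncol δ),
        osc g ((i:ℝ)*δ) ((i:ℝ)*δ+δ) ≤ 2 * δ * (t.filter (P i)).card := by
      intro i _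
      have hab : (i:ℝ)*δ ≤ (i:ℝ)*δ + δ := by linarith
      have himg : IsCompact (g '' Icc ((i:ℝ)*δ) ((i:ℝ)*δ+δ)) := isCompact_Icc.image hg
      have hne : (g '' Icc ((i:ℝ)*δ) ((i:ℝ)*δ+δ)).Nonempty := (Set.nonempty_Icc.mpr hab).image g
      have hconn : IsPreconnected (g '' Icc ((i:ℝ)*δ) ((i:ℝ)*δ+δ)) :=
        isPreconnected_Icc.image g hg.continuousOn
      have hIcc : Icc (sInf (g '' Icc ((i:ℝ)*δ) ((i:ℝ)*δ+δ))) (sSup (g '' Icc ((i:ℝ)*δ) ((i:ℝ)*δ+δ)))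
          ⊆ g '' Icc ((i:ℝ)*δ) ((i:ℝ)*δ+δ) :=
        hconn.Icc_subset (himg.sInf_mem hne) (himg.sSup_mem hne)
      -- the image is covered by the vertical slices of relevant balls
      have hcover : g '' Icc ((i:ℝ)*δ) ((i:ℝ)*δ+δ) ⊆
          ⋃ p ∈ t.filter (P i), Icc (p.2 - δ) (p.2 + δ) := by
        rintro _ ⟨x, hx, rfl⟩
        have hx0 : (0:ℝ) ≤ x := le_trans (by positivity) hx.1
        have hiδ : (i:ℝ)*δ < 1 := by
          have hlt : (i:ℝ) < ncol δ := by exact_mod_cast Finset.mem_range.mp ‹i ∈ range (ncol δ)›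
          have hceil : (ncol δ : ℝ) < 1/δ + 1 := Nat.ceil_lt_add_one (by positivity)
          have : (i:ℝ) ≤ (ncol δ : ℝ) - 1 := by
            have : i + 1 ≤ ncol δ := Finset.mem_range.mp ‹i ∈ range (ncol δ)›
            have := (Nat.cast_le (α := ℝ)).mpr this
            push_cast at this
            linarith
          have h2 : (i:ℝ) < 1/δ := by linarith
          calc (i:ℝ)*δ < (1/δ)*δ := by apply mul_lt_mul_of_pos_right h2 hδ
          _ = 1 := by field_simp
        set x' := min 1 x with hx'
        have hx'01 : x' ∈ Icc (0:ℝ) 1 := ⟨le_min zero_le_one hx0, min_le_left _ _⟩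
        have hx'col : x' ∈ Icc ((i:ℝ)*δ) ((i:ℝ)*δ+δ) :=
          ⟨le_min hiδ.le hx.1, le_trans (min_le_right _ _) hx.2⟩
        have hgx : g x = g x' := hclamp x hx0
        rw [hgx]
        obtain ⟨p, hp, hd⟩ := mem_iUnion₂.mp (ht ⟨x', hx'01, rfl⟩)
        rw [Metric.mem_closedBall, Prod.dist_eq] at hd
        have hd1 := le_trans (le_max_left _ _) hd
        have hd2 := le_trans (le_max_right _ _) hd
        rw [Real.dist_eq, abs_le] at hd1 hd2
        refine mem_iUnion₂.mpr ⟨p, Finset.mem_filter.mpr ⟨hp, ?_⟩, ?_⟩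
        · show |p.1 - (i:ℝ)*δ| ≤ 2*δ
          rw [abs_le]
          constructor <;> [linarith [hd1.1, hx'col.1, hx'col.2]; linarith [hd1.2, hx'col.1, hx'col.2]]
        · constructor <;> [linarith [hd2.1]; linarith [hd2.2]]
      have := length_le_card (t.filter (P i)) (fun p => p.2) hδ.le
        (le_trans hIcc hcover)
      rw [osc]
      linarith
    -- double counting
    have hdouble : ∑ i ∈ range (ncol δ), ((t.filter (P i)).card : ℝ) ≤ 5 * t.card := by
      have hswap : ∑ i ∈ range (ncol δ), ((t.filter (P i)).card)
          = ∑ p ∈ t, (((range (ncol δ)).filter (fun i => P i p)).card) := by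
        simp only [Finset.card_filter]
        rw [Finset.sum_comm]
      have hper : ∀ p ∈ t, (((range (ncol δ)).filter (fun i => P i p)).card) ≤ 5 := by
        intro p _
        apply card_le_of_close (k := 4)
        intro a ha b hb
        rw [Finset.mem_filter] at ha hb
        have h1 := abs_le.mp ha.2
        have h2 := abs_le.mp hb.2
        by_contra hcon
        push_neg at hcon
        have : ((b:ℝ) + 4) * δ < (a:ℝ) * δ := by
          apply mul_lt_mul_of_pos_right _ hδ
          have : (b:ℕ) + 4 < a := hcon
          exact_mod_cast (by exact_mod_cast this : ((b + 4 : ℕ):ℝ) < (a:ℝ))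
        nlinarith
      calc (∑ i ∈ range (ncol δ), ((t.filter (P i)).card) : ℝ)
          = ∑ p ∈ t, (((range (ncol δ)).filter (fun i => P i p)).card : ℝ) := by
            exact_mod_cast congrArg Nat.cast hswap
      _ ≤ ∑ p ∈ t, (5:ℝ) := Finset.sum_le_sum (fun p hp => by exact_mod_cast hper p hp)
      _ = 5 * t.card := by rw [Finset.sum_const]; push_cast; ring
    calc Tosc g δ ≤ ∑ i ∈ range (ncol δ), 2 * δ * ((t.filter (P i)).card : ℝ) :=
          Finset.sum_le_sum hcol
    _ = 2 * δ * ∑ i ∈ range (ncol δ), ((t.filter (P i)).card : ℝ) := by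
          rw [Finset.mul_sum]
    _ ≤ 2 * δ * (5 * t.card) := by
          apply mul_le_mul_of_nonneg_left hdouble (by positivity)
    _ = 10 * δ * t.card := by ring
  rw [Psi]; linarith

section Talg
variable {g1 g2 : ℝ → ℝ}

lemma Tosc_nonneg (hg : Continuous g) (hδ : 0 ≤ δ) : 0 ≤ Tosc g δ :=
  Finset.sum_nonneg fun i _ => osc_nonneg hg (by nlinarith [Nat.cast_nonneg (α := ℝ) i])

lemma Tosc_add_le (hg1 : Continuous g1) (hg2 : Continuous g2) (hδ : 0 ≤ δ) :
    Tosc (fun x => g1 x + g2 x) δ ≤ Tosc g1 δ + Tosc g2 δ := by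
  rw [Tosc, Tosc, Tosc, ← Finset.sum_add_distrib]
  exact Finset.sum_le_sum fun i _ =>
    osc_add_le hg1 hg2 (by nlinarith [Nat.cast_nonneg (α := ℝ) i])

lemma Tosc_mul_le (hg1 : Continuous g1) (hg2 : Continuous g2) (hδ : 0 ≤ δ)
    {M1 M2 : ℝ} (h1 : ∀ x, |g1 x| ≤ M1) (h2 : ∀ x, |g2 x| ≤ M2) :
    Tosc (fun x => g1 x * g2 x) δ ≤ M1 * Tosc g2 δ + M2 * Tosc g1 δ := by
  rw [Tosc, Tosc, Tosc, Finset.mul_sum, Finset.mul_sum, ← Finset.sum_add_distrib]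
  exact Finset.sum_le_sum fun i _ =>
    osc_mul_le hg1 hg2 (by nlinarith [Nat.cast_nonneg (α := ℝ) i]) h1 h2

lemma Tosc_const_le (c : ℝ) (hδ : 0 ≤ δ) : Tosc (fun _ => c) δ ≤ 0 := by
  rw [Tosc]
  apply Finset.sum_nonpos fun i _ => osc_const c (by nlinarith [Nat.cast_nonneg (α := ℝ) i])

lemma Tosc_le_bound (hg : Continuous g) (hδ : 0 ≤ δ) {M : ℝ} (h : ∀ x, |g x| ≤ M) :
    Tosc g δ ≤ (ncol δ : ℝ) * (2 * M) := by
  calc Tosc g δ ≤ ∑ _i ∈ Finset.range (ncol δ), 2 * M :=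
        Finset.sum_le_sum fun i _ =>
          osc_le_two_mul hg (by nlinarith [Nat.cast_nonneg (α := ℝ) i]) h
  _ = (ncol δ : ℝ) * (2 * M) := by rw [Finset.sum_const, Finset.card_range]; push_cast; ring

end Talg

lemma Psi_nonneg (hg : Continuous g) (hδ : 0 < δ) : 0 ≤ Psi g δ := by
  rw [Psi]
  have := Tosc_nonneg hg hδ.le
  positivity

lemma ncol_mul_le_Psi (hg : Continuous g) (hδ : 0 < δ) : (ncol δ : ℝ) * δ ≤ Psi g δ := by
  rw [Psi]; linarith [Tosc_nonneg hg hδ.le]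

lemma Tosc_le_Psi (hδ : 0 < δ) : Tosc g δ ≤ Psi g δ := by
  rw [Psi]
  have : 0 ≤ (ncol δ : ℝ) * δ := by positivity
  linarith

lemma Psi_le_global (hg : Continuous g) (hδ : 0 < δ) (hδ1 : δ ≤ 1)
    {M : ℝ} (h : ∀ x, |g x| ≤ M) : Psi g δ ≤ (2 + 4 * M) / δ := by
  have hM : 0 ≤ M := le_trans (abs_nonneg _) (h 0)
  have h1 := ncol_mul_le hδ hδ1
  have h2 := ncol_le hδ hδ1
  have h3 := Tosc_le_bound hg hδ.le h
  have h4 : (ncol δ : ℝ) * (2*M) ≤ (2/δ) * (2*M) := by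
    apply mul_le_mul_of_nonneg_right h2 (by positivity)
  rw [Psi]
  have : 2 ≤ 2/δ := by rw [le_div_iff₀ hδ]; linarith
  calc (ncol δ : ℝ) * δ + Tosc g δ ≤ 2 + (2/δ)*(2*M) := by linarith
  _ ≤ 2/δ + (2/δ)*(2*M) := by linarith
  _ = (2 + 4*M)/δ := by field_simp; ring

lemma coverNum_le_Psi (hg : Continuous g) (hδ : 0 < δ) :
    (coverNum (graphOf g) δ : ℝ) ≤ 3 * Psi g δ / δ := by
  obtain ⟨t, hcard, hcov⟩ := exists_cover hg hδ
  have h1 : (coverNum (graphOf g) δ : ℝ) ≤ t.card :=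
    Nat.cast_le.mpr (coverNum_le_card t hcov)
  have hT0 := Tosc_nonneg hg hδ.le
  have hn0 : (0:ℝ) ≤ (ncol δ : ℝ) * δ := by positivity
  calc (coverNum (graphOf g) δ : ℝ) ≤ Tosc g δ / (2*δ) + 2 * (ncol δ) := le_trans h1 hcard
  _ ≤ 3 * Psi g δ / δ := by
      rw [Psi]
      rw [div_add' _ _ _ (by positivity : (2*δ:ℝ) ≠ 0), div_le_div_iff₀ (by positivity) hδ]
      ring_nf
      nlinarith [hT0, hn0]

lemma Psi_le_coverNum' (hg : Continuous g) (hclamp : ∀ x : ℝ, 0 ≤ x → g x = g (min 1 x))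
    (hδ : 0 < δ) (hδ1 : δ ≤ 1) :
    Psi g δ ≤ 14 * δ * (coverNum (graphOf g) δ : ℝ) := by
  obtain ⟨t0, hcard0, hcov0⟩ := coverNum_spec ⟨(exists_cover hg hδ).choose,
    (exists_cover hg hδ).choose_spec.2⟩
  have := Psi_le_coverNum hg hclamp hδ hδ1 hcov0
  rw [hcard0] at this
  exact this

lemma coverNum_graph_pos (hg : Continuous g) (hδ : 0 < δ) :
    0 < coverNum (graphOf g) δ :=
  coverNum_pos graphOf_nonempty ⟨(exists_cover hg hδ).choose, (exists_cover hg hδ).choose_spec.2⟩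

/-- Extension of a continuous map on `[0,1]` to `ℝ` by clamping. -/
noncomputable def EE (f : C(↥(Set.Icc (0:ℝ) 1), ℝ)) : ℝ → ℝ :=
  fun x => f (Set.projIcc 0 1 zero_le_one x)

lemma EE_continuous (f : C(↥(Set.Icc (0:ℝ) 1), ℝ)) : Continuous (EE f) :=
  f.continuous.comp continuous_projIcc

lemma EE_clamp (f : C(↥(Set.Icc (0:ℝ) 1), ℝ)) : ∀ x : ℝ, 0 ≤ x → EE f x = EE f (min 1 x) := by
  intro x _
  rw [EE]
  congr 1
  rw [Set.projIcc, Set.projIcc]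
  apply Subtype.ext
  simp [min_assoc]

lemma EE_add (f g : C(↥(Set.Icc (0:ℝ) 1), ℝ)) : EE (f + g) = fun x => EE f x + EE g x := by
  funext x; simp [EE]

lemma EE_mul (f g : C(↥(Set.Icc (0:ℝ) 1), ℝ)) : EE (f * g) = fun x => EE f x * EE g x := by
  funext x; simp [EE]

lemma EE_algebraMap (c : ℝ) : EE (algebraMap ℝ C(↥(Set.Icc (0:ℝ) 1), ℝ) c) = fun _ => c := by
  funext x; simp [EE]

instance : CompactSpace ↥(Set.Icc (0:ℝ) 1) := isCompact_iff_compactSpace.mp isCompact_Icc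

lemma EE_norm (f : C(↥(Set.Icc (0:ℝ) 1), ℝ)) (x : ℝ) : |EE f x| ≤ ‖f‖ := by
  rw [EE]
  exact le_trans (le_of_eq (Real.norm_eq_abs _).symm) (f.norm_coe_le_norm _)


lemma graphC_eq (f : C(↥(Set.Icc (0:ℝ) 1), ℝ)) : graphC f = graphOf (EE f) := by
  ext ⟨a, b⟩
  constructor
  · rintro ⟨⟨x, hx⟩, heq⟩
    refine ⟨x, hx, ?_⟩
    simp only at heq
    rw [← heq]
    simp [EE, Set.projIcc_of_mem zero_le_one hx]
  · rintro ⟨x, hx, heq⟩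
    exact ⟨⟨x, hx⟩, by rw [← heq]; simp [EE, Set.projIcc_of_mem zero_le_one hx]⟩

lemma key_induction (m : ℕ) (hm : 0 < m) (f : Fin m → C(↥(Set.Icc (0:ℝ) 1), ℝ))
    (r : C(↥(Set.Icc (0:ℝ) 1), ℝ)) (hr : r ∈ Algebra.adjoin ℝ (Set.range f)) :
    ∃ C : ℝ, 1 ≤ C ∧ ∀ δ : ℝ, 0 < δ →
      Psi (EE r) δ ≤ C * ∑ i : Fin m, Psi (EE (f i)) δ := by
  have hsum_nonneg : ∀ δ : ℝ, 0 < δ → (0:ℝ) ≤ ∑ i : Fin m, Psi (EE (f i)) δ :=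
    fun δ hδ => Finset.sum_nonneg fun i _ => Psi_nonneg (EE_continuous _) hδ
  have hsingle : ∀ (j : Fin m) (δ : ℝ), 0 < δ →
      Psi (EE (f j)) δ ≤ ∑ i : Fin m, Psi (EE (f i)) δ := by
    intro j δ hδ
    exact Finset.single_le_sum (fun i _ => Psi_nonneg (EE_continuous _) hδ) (Finset.mem_univ j)
  have hbase : ∀ δ : ℝ, 0 < δ → (ncol δ : ℝ) * δ ≤ ∑ i : Fin m, Psi (EE (f i)) δ := by
    intro δ hδ
    exact le_trans (ncol_mul_le_Psi (EE_continuous _) hδ) (hsingle ⟨0, hm⟩ δ hδ)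
  induction hr using Algebra.adjoin_induction with
  | mem x hx =>
    obtain ⟨j, rfl⟩ := hx
    exact ⟨1, le_refl _, fun δ hδ => by rw [one_mul]; exact hsingle j δ hδ⟩
  | algebraMap c =>
    refine ⟨1, le_refl _, fun δ hδ => ?_⟩
    rw [one_mul, Psi, EE_algebraMap]
    have := Tosc_const_le (δ := δ) c hδ.le
    linarith [hbase δ hδ]
  | add x y hx hy ihx ihy =>
    obtain ⟨Cx, hCx1, hCx⟩ := ihx
    obtain ⟨Cy, hCy1, hCy⟩ := ihy
    refine ⟨Cx + Cy, by linarith, fun δ hδ => ?_⟩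
    have hT : Tosc (EE (x + y)) δ ≤ Tosc (EE x) δ + Tosc (EE y) δ := by
      rw [EE_add]
      exact Tosc_add_le (EE_continuous x) (EE_continuous y) hδ.le
    have h1 := hCx δ hδ
    have h2 := hCy δ hδ
    rw [Psi] at h1 h2 ⊢
    have hn : 0 ≤ (ncol δ : ℝ) * δ := by positivity
    linarith
  | mul x y hx hy ihx ihy =>
    obtain ⟨Cx, hCx1, hCx⟩ := ihx
    obtain ⟨Cy, hCy1, hCy⟩ := ihy
    refine ⟨1 + ‖x‖ * Cy + ‖y‖ * Cx, by nlinarith [norm_nonneg x, norm_nonneg y], fun δ hδ => ?_⟩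
    have hT : Tosc (EE (x * y)) δ ≤ ‖x‖ * Tosc (EE y) δ + ‖y‖ * Tosc (EE x) δ := by
      rw [EE_mul]
      exact Tosc_mul_le (EE_continuous x) (EE_continuous y) hδ.le (EE_norm x) (EE_norm y)
    have h1 : Tosc (EE x) δ ≤ Cx * ∑ i : Fin m, Psi (EE (f i)) δ :=
      le_trans (Tosc_le_Psi hδ) (hCx δ hδ)
    have h2 : Tosc (EE y) δ ≤ Cy * ∑ i : Fin m, Psi (EE (f i)) δ :=
      le_trans (Tosc_le_Psi hδ) (hCy δ hδ)
    have hb := hbase δ hδ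
    have hS := hsum_nonneg δ hδ
    rw [Psi]
    have e1 : ‖x‖ * Tosc (EE y) δ ≤ ‖x‖ * (Cy * ∑ i : Fin m, Psi (EE (f i)) δ) :=
      mul_le_mul_of_nonneg_left h2 (norm_nonneg _)
    have e2 : ‖y‖ * Tosc (EE x) δ ≤ ‖y‖ * (Cx * ∑ i : Fin m, Psi (EE (f i)) δ) :=
      mul_le_mul_of_nonneg_left h1 (norm_nonneg _)
    calc (ncol δ : ℝ) * δ + Tosc (EE (x*y)) δ
        ≤ (∑ i : Fin m, Psi (EE (f i)) δ) + (‖x‖ * (Cy * ∑ i : Fin m, Psi (EE (f i)) δ)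
            + ‖y‖ * (Cx * ∑ i : Fin m, Psi (EE (f i)) δ)) := by linarith
    _ = (1 + ‖x‖ * Cy + ‖y‖ * Cx) * ∑ i : Fin m, Psi (EE (f i)) δ := by ring


lemma log_nat_nonneg (n : ℕ) : 0 ≤ Real.log n := by
  rcases Nat.eq_zero_or_pos n with rfl | h
  · simp
  · exact Real.log_nonneg (by exact_mod_cast h)

lemma u_bounded {g : ℝ → ℝ} (hg : Continuous g) {M : ℝ} (h : ∀ x, |g x| ≤ M) :
    ∃ b : ℝ, ∀ᶠ δ in nhdsWithin (0:ℝ) (Set.Ioi 0),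
      Real.log (coverNum (graphOf g) δ) / -Real.log δ ≤ b := by
  have hM : 0 ≤ M := le_trans (abs_nonneg _) (h 0)
  refine ⟨Real.log (6 + 12*M) / Real.log 2 + 2,
    eventually_of_mem (Ioo_mem_nhdsGT_of_mem (⟨le_refl 0, by norm_num⟩ : (0:ℝ) ∈ Ico 0 (1/2)))
      fun δ hδm => ?_⟩
  obtain ⟨hδ0, hδhalf⟩ := hδm
  have hδ1 : δ ≤ 1 := by linarith
  have hL : 0 < -Real.log δ := by
    have := Real.log_neg hδ0 (by linarith); linarith
  have hlog2 : Real.log 2 ≤ -Real.log δ := by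
    have h1 : Real.log δ ≤ Real.log (1/2) := Real.log_le_log hδ0 hδhalf.le
    rw [show (1:ℝ)/2 = 2⁻¹ by norm_num, Real.log_inv] at h1
    linarith
  have hNpos : (0:ℝ) < (coverNum (graphOf g) δ : ℝ) := by
    exact_mod_cast coverNum_graph_pos hg hδ0
  have hchain : (coverNum (graphOf g) δ : ℝ) ≤ (6 + 12*M) / δ^2 := by
    have c1 := coverNum_le_Psi hg hδ0
    have c2 := Psi_le_global hg hδ0 hδ1 h
    calc (coverNum (graphOf g) δ : ℝ) ≤ 3 * Psi g δ / δ := c1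
    _ ≤ 3 * ((2 + 4*M)/δ) / δ := by gcongr
    _ = (6 + 12*M) / δ^2 := by field_simp; ring
  have hloglog : Real.log (coverNum (graphOf g) δ) ≤ Real.log (6 + 12*M) - 2 * Real.log δ := by
    calc Real.log (coverNum (graphOf g) δ) ≤ Real.log ((6 + 12*M)/δ^2) :=
          Real.log_le_log hNpos hchain
    _ = Real.log (6 + 12*M) - Real.log (δ^2) := Real.log_div (by linarith) (by positivity)
    _ = Real.log (6 + 12*M) - 2 * Real.log δ := by rw [Real.log_pow]; norm_num
  have hlog6 : 0 ≤ Real.log (6 + 12*M) := Real.log_nonneg (by linarith)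
  calc Real.log (coverNum (graphOf g) δ) / -Real.log δ
      ≤ (Real.log (6 + 12*M) - 2 * Real.log δ) / -Real.log δ := by gcongr
  _ = Real.log (6 + 12*M) / -Real.log δ + 2 := by
        rw [show Real.log (6 + 12*M) - 2*Real.log δ
            = Real.log (6 + 12*M) + 2*(-Real.log δ) by ring, add_div, mul_div_assoc,
          div_self hL.ne', mul_one]
  _ ≤ Real.log (6 + 12*M) / Real.log 2 + 2 := by
        have := div_le_div_of_nonneg_left hlog6 (by positivity : (0:ℝ) < Real.log 2) hlog2
        linarith


theorem upperBoxDim_graph_polynomial_many (m : ℕ) (hm : 0 < m)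
    (f : Fin m → C(↥(Set.Icc (0:ℝ) 1), ℝ)) (r : C(↥(Set.Icc (0:ℝ) 1), ℝ))
    (hr : r ∈ Algebra.adjoin ℝ (Set.range f)) :
    upperBoxDim (graphC r) ≤ ⨆ i, upperBoxDim (graphC (f i)) := by
  haveI : Nonempty (Fin m) := ⟨⟨0, hm⟩⟩
  obtain ⟨C, hC1, hC⟩ := key_induction m hm f r hr
  set filt := nhdsWithin (0:ℝ) (Set.Ioi 0) with hfilt
  set u : C(↥(Set.Icc (0:ℝ) 1), ℝ) → ℝ → ℝ := fun h δ =>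
    Real.log (coverNum (graphOf (EE h)) δ) / -Real.log δ with hu
  have hgraph : ∀ h : C(↥(Set.Icc (0:ℝ) 1), ℝ), upperBoxDim (graphC h) = Filter.limsup (u h) filt := by
    intro h
    rw [graphC_eq, upperBoxDim]
  rw [hgraph]
  have hRHS : (⨆ i, upperBoxDim (graphC (f i))) = ⨆ i, Filter.limsup (u (f i)) filt := by
    congr 1; funext i; exact hgraph (f i)
  rw [hRHS]
  set S := ⨆ i, Filter.limsup (u (f i)) filt with hS
  set K : ℝ := 42 * C * m with hK
  have hK1 : (1:ℝ) ≤ K := by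
    rw [hK]
    have : (1:ℝ) ≤ (m:ℝ) := by exact_mod_cast hm
    nlinarith
  -- eventual nonnegativity of u r (for coboundedness)
  have hIoo : Set.Ioo (0:ℝ) 1 ∈ filt :=
    Ioo_mem_nhdsGT_of_mem (⟨le_refl 0, zero_lt_one⟩ : (0:ℝ) ∈ Set.Ico 0 1)
  have hnonneg : ∀ᶠ δ in filt, 0 ≤ u r δ := by
    apply eventually_of_mem hIoo
    intro δ hδ
    have hL : 0 < -Real.log δ := by have := Real.log_neg hδ.1 hδ.2; linarith
    exact div_nonneg (log_nat_nonneg _) hL.le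
  have hcobdd : Filter.IsCoboundedUnder (· ≤ ·) filt (u r) :=
    Filter.IsBoundedUnder.isCoboundedUnder_le ⟨0, by
      rw [Filter.eventually_map]; exact hnonneg⟩
  -- bounds above for each u (f i)
  have hbdd : ∀ i : Fin m, Filter.IsBoundedUnder (· ≤ ·) filt (u (f i)) := by
    intro i
    obtain ⟨b, hb⟩ := u_bounded (EE_continuous (f i)) (EE_norm (f i))
    exact ⟨b, by rw [Filter.eventually_map]; exact hb⟩
  -- the supremum bounds each limsup
  have hDS : ∀ i : Fin m, Filter.limsup (u (f i)) filt ≤ S :=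
    fun i => le_ciSup (f := fun j : Fin m => Filter.limsup (u (f j)) filt)
      (Set.Finite.bddAbove (Set.finite_range _)) i
  -- tendsto of the error term
  have htends : Filter.Tendsto (fun δ : ℝ => Real.log K / -Real.log δ) filt (nhds 0) := by
    apply Filter.Tendsto.div_atTop tendsto_const_nhds
    exact Filter.Tendsto.comp tendsto_neg_atBot_atTop Real.tendsto_log_nhdsGT_zero
  apply le_of_forall_pos_le_add
  intro ε hε
  apply Filter.limsup_le_of_le hcobdd
  have heps : ∀ᶠ δ in filt, Real.log K / -Real.log δ < ε/2 :=
    Filter.Tendsto.eventually_lt_const (by linarith) htends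
  have hdims : ∀ᶠ δ in filt, ∀ i : Fin m, u (f i) δ < Filter.limsup (u (f i)) filt + ε/2 :=
    eventually_all.mpr fun i =>
      Filter.eventually_lt_of_limsup_lt (by linarith) (hbdd i)
  filter_upwards [eventually_of_mem hIoo (fun δ hδ => hδ), heps, hdims] with δ hδIoo hδeps hδdims
  obtain ⟨hδ0, hδ1⟩ := hδIoo
  have hL : 0 < -Real.log δ := by have := Real.log_neg hδ0 hδ1; linarith
  -- argmax
  obtain ⟨istar, _, hmax⟩ := Finset.exists_max_image Finset.univ
    (fun i : Fin m => coverNum (graphOf (EE (f i))) δ) ⟨⟨0, hm⟩, Finset.mem_univ _⟩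
  -- main pointwise chain
  have hNstarpos : (0:ℝ) < (coverNum (graphOf (EE (f istar))) δ : ℝ) := by
    exact_mod_cast coverNum_graph_pos (EE_continuous _) hδ0
  have hNrpos : (0:ℝ) < (coverNum (graphOf (EE r)) δ : ℝ) := by
    exact_mod_cast coverNum_graph_pos (EE_continuous _) hδ0
  have hchain : (coverNum (graphOf (EE r)) δ : ℝ)
      ≤ K * (coverNum (graphOf (EE (f istar))) δ : ℝ) := by
    have c1 := coverNum_le_Psi (EE_continuous r) hδ0
    have c2 := hC δ hδ0
    have c3 : ∑ i : Fin m, Psi (EE (f i)) δ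
        ≤ 14 * δ * ((m : ℝ) * (coverNum (graphOf (EE (f istar))) δ : ℝ)) := by
      calc ∑ i : Fin m, Psi (EE (f i)) δ
          ≤ ∑ i : Fin m, 14 * δ * (coverNum (graphOf (EE (f i))) δ : ℝ) :=
            Finset.sum_le_sum fun i _ =>
              Psi_le_coverNum' (EE_continuous _) (EE_clamp _) hδ0 hδ1.le
      _ ≤ ∑ _i : Fin m, 14 * δ * (coverNum (graphOf (EE (f istar))) δ : ℝ) :=
            Finset.sum_le_sum fun i _ => by
              have : (coverNum (graphOf (EE (f i))) δ : ℝ)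
                  ≤ (coverNum (graphOf (EE (f istar))) δ : ℝ) := by
                exact_mod_cast hmax i (Finset.mem_univ _)
              nlinarith [hδ0.le]
      _ = 14 * δ * ((m : ℝ) * (coverNum (graphOf (EE (f istar))) δ : ℝ)) := by
            rw [Finset.sum_const, Finset.card_univ, Fintype.card_fin, nsmul_eq_mul]; ring
    have hCpos : (0:ℝ) < C := by linarith
    calc (coverNum (graphOf (EE r)) δ : ℝ) ≤ 3 * Psi (EE r) δ / δ := c1
    _ ≤ 3 * (C * (14 * δ * ((m : ℝ) * (coverNum (graphOf (EE (f istar))) δ : ℝ)))) / δ := by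
        gcongr
        calc Psi (EE r) δ ≤ C * ∑ i : Fin m, Psi (EE (f i)) δ := c2
        _ ≤ C * (14 * δ * ((m : ℝ) * (coverNum (graphOf (EE (f istar))) δ : ℝ))) := by
            exact mul_le_mul_of_nonneg_left c3 hCpos.le
    _ = K * (coverNum (graphOf (EE (f istar))) δ : ℝ) := by
        rw [hK]; field_simp; ring
  have hlog : Real.log (coverNum (graphOf (EE r)) δ)
      ≤ Real.log K + Real.log (coverNum (graphOf (EE (f istar))) δ) := by
    calc Real.log (coverNum (graphOf (EE r)) δ)
        ≤ Real.log (K * (coverNum (graphOf (EE (f istar))) δ : ℝ)) :=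
          Real.log_le_log hNrpos hchain
    _ = _ := Real.log_mul (by linarith) hNstarpos.ne'
  have hfinal : u r δ ≤ Real.log K / -Real.log δ + u (f istar) δ := by
    rw [hu]
    simp only
    calc Real.log (coverNum (graphOf (EE r)) δ) / -Real.log δ
        ≤ (Real.log K + Real.log (coverNum (graphOf (EE (f istar))) δ)) / -Real.log δ := by
          gcongr
    _ = Real.log K / -Real.log δ + Real.log (coverNum (graphOf (EE (f istar))) δ) / -Real.log δ :=
          add_div _ _ _
  calc u r δ ≤ Real.log K / -Real.log δ + u (f istar) δ := hfinal
  _ ≤ ε/2 + (Filter.limsup (u (f istar)) filt + ε/2) := by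
      have := hδdims istar
      linarith [hδeps]
  _ ≤ S + ε := by linarith [hDS istar]
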